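/- Let TA = (L, L₀, ∅, Σ, CX, I, E) be a timed automaton with an empty set of urgent locations. Then the reachable subsystems of TS'(TA) and TS(INV(TA)) are isomorphic: there is a bijection f from the reachable states of TS'(TA) onto the reachable states of TS(INV(TA)) such that f maps the initial states of TS'(TA) exactly onto the initial states of TS(INV(TA)), and for all reachable states q, q' and every label α ∈ Σ ∪ ℝ≥0, q →α q' in TS'(TA) if and only if f(q) →α f(q') in TS(INV(TA)). -/

import Mathlib

/-!
Framework for timed automata.  Clock valuations assign non-negative reals to
clocks.  Guards and location invariants are represented semantically, as
predicates on clock valuations.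
-/

/-- Clock valuations: each clock gets a non-negative real. -/
abbrev Val (C : Type) := C → NNReal

/-- The valuation `ν₀` assigning `0` to every clock. -/
def zeroVal {C : Type} : Val C := fun _ => 0

open Classical in
/-- `ν[λ := 0]`: reset the clocks in `lam` to zero. -/
noncomputable def resetVal {C : Type} (ν : Val C) (lam : Set C) : Val C :=
  fun x => if x ∈ lam then 0 else ν x

/-- `ν + δ`: advance every clock by `δ`. -/
def shift {C : Type} (ν : Val C) (δ : NNReal) : Val C := fun x => ν x + δ

/-- A timed automaton `TA = (L, L₀, L_u, Σ, CX, I, E)` with location type `L`,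
action alphabet `A` and clock type `C`:  a set of initial locations (nonempty),
a set of urgent locations, an invariant map, and a set of edges
`(l, a, φ, λ, l')` consisting of source, action, guard, reset set and target. -/
structure TA (L A C : Type) where
  init : Set L
  init_nonempty : init.Nonempty
  urgent : Set L
  inv : L → Val C → Prop
  edges : Set (L × A × (Val C → Prop) × Set C × L)

/-- States of the associated transition systems: location/valuation pairs. -/
abbrev State (L C : Type) := L × Val C

/-- Initial states: initial locations paired with the zero valuation. -/
def TA.initStates {L A C : Type} (T : TA L A C) : Set (State L C) :=
  {p | p.1 ∈ T.init ∧ p.2 = zeroVal}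

/-- Baseline semantics `TS(TA)`.  Labels are `Sum.inl a` for actions `a ∈ Σ`
and `Sum.inr δ` for delays `δ ∈ ℝ≥0`.  Action transitions require the target
invariant to hold; delay transitions require the source location not to be
urgent and the invariant to hold throughout the delay. -/
def TS {L A C : Type} (T : TA L A C) :
    State L C → (A ⊕ NNReal) → State L C → Prop := fun p α q =>
  match α with
  | Sum.inl a => ∃ φ lam, (p.1, a, φ, lam, q.1) ∈ T.edges ∧ φ p.2 ∧
      q.2 = resetVal p.2 lam ∧ T.inv q.1 q.2
  | Sum.inr δ => p.1 ∉ T.urgent ∧ q.1 = p.1 ∧ q.2 = shift p.2 δ ∧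
      ∀ k ≤ δ, T.inv p.1 (shift p.2 k)

/-- Unsatisfied-invariants semantics `TS'(TA)`: like `TS(TA)` except action
transitions do not require the target invariant to hold. -/
def TS' {L A C : Type} (T : TA L A C) :
    State L C → (A ⊕ NNReal) → State L C → Prop := fun p α q =>
  match α with
  | Sum.inl a => ∃ φ lam, (p.1, a, φ, lam, q.1) ∈ T.edges ∧ φ p.2 ∧
      q.2 = resetVal p.2 lam
  | Sum.inr δ => p.1 ∉ T.urgent ∧ q.1 = p.1 ∧ q.2 = shift p.2 δ ∧
      ∀ k ≤ δ, T.inv p.1 (shift p.2 k)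

/-- Reachable states: smallest set containing the initial states and closed
under the transition relation. -/
inductive Reachable {S Λ : Type} (init : Set S) (tr : S → Λ → S → Prop) : S → Prop
  | base {s : S} : s ∈ init → Reachable init tr s
  | step {s : S} {α : Λ} {s' : S} :
      Reachable init tr s → tr s α s' → Reachable init tr s'

/-- The construction `INV(TA)` (for `TA` with no urgent locations).  Locations
are `L ⊕ L`: `Sum.inl l` is the original location `l`, `Sum.inr l` is its fresh
urgent copy `l_u`.  For each original edge `(l, a, φ, λ, l')`, four edges are
introduced, with guards `φ₁ = φ ∧ resetPred(I(l'), λ)` (semantically: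
`φ ν ∧ I(l')(ν[λ:=0])`) and `φ₂ = φ ∧ ¬resetPred(I(l'), λ)`. -/
noncomputable def INV {L A C : Type} (T : TA L A C) : TA (L ⊕ L) A C where
  init := Sum.inl '' {l | l ∈ T.init ∧ T.inv l zeroVal} ∪
          Sum.inr '' {l | l ∈ T.init ∧ ¬ T.inv l zeroVal}
  init_nonempty := by
    obtain ⟨l, hl⟩ := T.init_nonempty
    by_cases h : T.inv l zeroVal
    · exact ⟨Sum.inl l, Set.mem_union_left _ (Set.mem_image_of_mem _ ⟨hl, h⟩)⟩
    · exact ⟨Sum.inr l, Set.mem_union_right _ (Set.mem_image_of_mem _ ⟨hl, h⟩)⟩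
  urgent := Set.range Sum.inr
  inv := fun l' ν =>
    match l' with
    | Sum.inl l => T.inv l ν
    | Sum.inr _ => True
  edges := { e | ∃ l a φ lam l', (l, a, φ, lam, l') ∈ T.edges ∧
      (e = (Sum.inl l, a, fun ν => φ ν ∧ T.inv l' (resetVal ν lam), lam, Sum.inl l') ∨
       e = (Sum.inl l, a, fun ν => φ ν ∧ ¬ T.inv l' (resetVal ν lam), lam, Sum.inr l') ∨
       e = (Sum.inr l, a, fun ν => φ ν ∧ T.inv l' (resetVal ν lam), lam, Sum.inl l') ∨
       e = (Sum.inr l, a, fun ν => φ ν ∧ ¬ T.inv l' (resetVal ν lam), lam, Sum.inr l')) }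

open Classical in
/-- The isomorphism map: tag the location with whether the invariant holds. -/
noncomputable def isoF {L A C : Type} (T : TA L A C) : State L C → State (L ⊕ L) C :=
  fun p => (if T.inv p.1 p.2 then Sum.inl p.1 else Sum.inr p.1, p.2)

lemma isoF_fst_pos {L A C : Type} (T : TA L A C) {p : State L C}
    (h : T.inv p.1 p.2) : (isoF T p).1 = Sum.inl p.1 := if_pos h

lemma isoF_fst_neg {L A C : Type} (T : TA L A C) {p : State L C}
    (h : ¬ T.inv p.1 p.2) : (isoF T p).1 = Sum.inr p.1 := if_neg h

lemma isoF_inj {L A C : Type} (T : TA L A C) : Function.Injective (isoF T) := by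
  classical
  rintro ⟨l, ν⟩ ⟨l', ν'⟩ h
  have h1 := congrArg Prod.fst h
  have h2 := congrArg Prod.snd h
  simp only [isoF] at h1 h2
  subst h2
  split_ifs at h1 <;> simp_all

lemma shift_zero {C : Type} (ν : Val C) : shift ν 0 = ν := by
  funext x; simp [shift]

lemma isoF_fwd {L A C : Type} (T : TA L A C) (hu : T.urgent = ∅)
    (p q : State L C) (α : A ⊕ NNReal) (h : TS' T p α q) :
    TS (INV T) (isoF T p) α (isoF T q) := by
  classical
  match α with
  | Sum.inl a =>
    obtain ⟨φ, lam, hedge, hφ, hq⟩ := h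
    by_cases hq' : T.inv q.1 q.2
    · have hq'' : T.inv q.1 (resetVal p.2 lam) := by rw [← hq]; exact hq'
      refine ⟨fun ν => φ ν ∧ T.inv q.1 (resetVal ν lam), lam, ?_, ⟨hφ, hq''⟩, hq, ?_⟩
      · refine ⟨p.1, a, φ, lam, q.1, hedge, ?_⟩
        by_cases hp : T.inv p.1 p.2
        · rw [isoF_fst_pos T hp, isoF_fst_pos T hq']; left; rfl
        · rw [isoF_fst_neg T hp, isoF_fst_pos T hq']; right; right; left; rfl
      · rw [isoF_fst_pos T hq']
        exact hq'
    · have hq'' : ¬ T.inv q.1 (resetVal p.2 lam) := by rw [← hq]; exact hq'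
      refine ⟨fun ν => φ ν ∧ ¬ T.inv q.1 (resetVal ν lam), lam, ?_, ⟨hφ, hq''⟩, hq, ?_⟩
      · refine ⟨p.1, a, φ, lam, q.1, hedge, ?_⟩
        by_cases hp : T.inv p.1 p.2
        · rw [isoF_fst_pos T hp, isoF_fst_neg T hq']; right; left; rfl
        · rw [isoF_fst_neg T hp, isoF_fst_neg T hq']; right; right; right; rfl
      · rw [isoF_fst_neg T hq']
        trivial
  | Sum.inr δ =>
    obtain ⟨-, hq1, hq2, hinv⟩ := h
    have h0 : T.inv p.1 p.2 := by
      have := hinv 0 zero_le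
      rwa [shift_zero] at this
    have hδ : T.inv q.1 q.2 := by
      rw [hq1, hq2]; exact hinv δ le_rfl
    refine ⟨?_, ?_, ?_, ?_⟩
    · rw [isoF_fst_pos T h0]
      rintro ⟨x, hx⟩
      cases hx
    · rw [isoF_fst_pos T h0, isoF_fst_pos T hδ, hq1]
    · exact hq2
    · intro k hk
      rw [isoF_fst_pos T h0]
      exact hinv k hk

lemma isoF_bwd {L A C : Type} (T : TA L A C) (hu : T.urgent = ∅)
    (p : State L C) (q' : State (L ⊕ L) C) (α : A ⊕ NNReal)
    (h : TS (INV T) (isoF T p) α q') :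
    ∃ q, TS' T p α q ∧ isoF T q = q' := by
  classical
  obtain ⟨c, ν'⟩ := q'
  match α with
  | Sum.inl a =>
    obtain ⟨φ', lam', hmem, hφ', hν', -⟩ := h
    have hν2 : ν' = resetVal p.2 lam' := hν'
    have hφ2 : φ' p.2 := hφ'
    obtain ⟨l, a', φ, lam, l', hedge, hcase⟩ := hmem
    by_cases hp : T.inv p.1 p.2 <;>
      [rw [isoF_fst_pos T hp] at hcase; rw [isoF_fst_neg T hp] at hcase] <;>
      rcases hcase with hc | hc | hc | hc <;>
      simp only [Prod.mk.injEq] at hc <;>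
      obtain ⟨h1, h2, h3, h4, h5⟩ := hc <;>
      first
        | (injection h1 with h0
           subst h0; subst h2; subst h3; subst h4; subst h5
           subst hν2
           obtain ⟨hφ, hr⟩ := hφ2
           exact ⟨(l', resetVal p.2 _), ⟨φ, _, hedge, hφ, rfl⟩, by simp [isoF, hr]⟩)
        | exact absurd h1 (by simp)
  | Sum.inr δ =>
    obtain ⟨hnu, hq1, hq2, hinv'⟩ := h
    have hp : T.inv p.1 p.2 := by
      by_contra hp
      exact hnu ⟨p.1, (isoF_fst_neg T hp).symm⟩
    rw [isoF_fst_pos T hp] at hq1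
    have hinv'' : ∀ k ≤ δ, T.inv p.1 (shift p.2 k) := by
      intro k hk
      have := hinv' k hk
      rw [isoF_fst_pos T hp] at this
      exact this
    have hinvδ : T.inv p.1 (shift p.2 δ) := hinv'' δ le_rfl
    have hν2 : ν' = shift p.2 δ := hq2
    subst hν2
    have hc : c = Sum.inl p.1 := hq1
    subst hc
    refine ⟨(p.1, shift p.2 δ), ⟨by simp [hu], rfl, rfl, hinv''⟩, ?_⟩
    simp [isoF, hinvδ]

lemma isoF_init {L A C : Type} (T : TA L A C) :
    isoF T '' T.initStates = (INV T).initStates := by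
  classical
  ext ⟨c, ν⟩
  constructor
  · rintro ⟨⟨l, ν₀⟩, ⟨hl, hν⟩, heq⟩
    simp only at hν hl
    subst hν
    refine ⟨?_, ?_⟩
    · rw [← heq]
      by_cases h : T.inv l zeroVal
      · exact Or.inl ⟨l, ⟨hl, h⟩, by simp [isoF, h]⟩
      · exact Or.inr ⟨l, ⟨hl, h⟩, by simp [isoF, h]⟩
    · rw [← heq]; rfl
  · rintro ⟨hc, hν⟩
    simp only at hν
    subst hν
    rcases hc with ⟨l, ⟨hl, h⟩, hc⟩ | ⟨l, ⟨hl, h⟩, hc⟩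
    · have hc' : (Sum.inl l : L ⊕ L) = c := hc
      exact ⟨(l, zeroVal), ⟨hl, rfl⟩, by simp [isoF, h, ← hc']⟩
    · have hc' : (Sum.inr l : L ⊕ L) = c := hc
      exact ⟨(l, zeroVal), ⟨hl, rfl⟩, by simp [isoF, h, ← hc']⟩

/-- For a timed automaton `TA` with no urgent locations, the
reachable subsystems of `TS'(TA)` and `TS(INV(TA))` are isomorphic: there is a
bijection `f` from the reachable states of `TS'(TA)` onto the reachable states
of `TS(INV(TA))` mapping initial states exactly onto initial states and such
that for all reachable `q, q'` and labels `α`, `q →α q'` in `TS'(TA)` iff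
`f q →α f q'` in `TS(INV(TA))`. -/
theorem statement_1 {L A C : Type} [Fintype L] [Fintype A] [Fintype C] [Nonempty C]
    (T : TA L A C) (hu : T.urgent = ∅) :
    ∃ f : State L C → State (L ⊕ L) C,
      Set.InjOn f {p | Reachable T.initStates (TS' T) p} ∧
      f '' {p | Reachable T.initStates (TS' T) p} =
        {q | Reachable (INV T).initStates (TS (INV T)) q} ∧
      f '' T.initStates = (INV T).initStates ∧
      (∀ p q, Reachable T.initStates (TS' T) p → Reachable T.initStates (TS' T) q →
        ∀ α : A ⊕ NNReal, TS' T p α q ↔ TS (INV T) (f p) α (f q)) := by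
  classical
  refine ⟨isoF T, (isoF_inj T).injOn, ?_, isoF_init T, ?_⟩
  · apply Set.Subset.antisymm
    · rintro q ⟨p, hp, rfl⟩
      simp only [Set.mem_setOf_eq] at hp ⊢
      induction hp with
      | base h =>
          exact Reachable.base ((isoF_init T) ▸ Set.mem_image_of_mem _ h)
      | step hr htr ih =>
          exact Reachable.step ih (isoF_fwd T hu _ _ _ htr)
    · intro q hq
      simp only [Set.mem_setOf_eq] at hq
      induction hq with
      | base h =>
          rw [← isoF_init T] at h
          obtain ⟨p, hp, rfl⟩ := h
          exact Set.mem_image_of_mem _ (Reachable.base hp)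
      | step hr htr ih =>
          obtain ⟨p, hp, rfl⟩ := ih
          simp only [Set.mem_setOf_eq] at hp
          obtain ⟨q₁, hq₁, rfl⟩ := isoF_bwd T hu p _ _ htr
          exact Set.mem_image_of_mem _ (Reachable.step hp hq₁)
  · intro p q _ _ α
    constructor
    · exact isoF_fwd T hu p q α
    · intro h
      obtain ⟨q₁, hq₁, heq⟩ := isoF_bwd T hu p _ α h
      rwa [isoF_inj T heq] at hq₁
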